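/- Cauchy estimate for Lie derivatives: let V be a bounded real-analytic vector field on 𝕋ⁿ_s, f a bounded real-analytic function on 𝕋ⁿ_s, and 0 < ς < s. Then the Lie derivative satisfies |ℒ_V f|_{s−ς} ≤ ς⁻¹ |V|_s |f|_s, where ℒ_V f = (d/dt)(f∘V^t)|_{t=0} and |·|_r denotes the sup norm on 𝕋ⁿ_r. -/

import Mathlib

/-- The complex strip 𝕋ⁿ_s (modeled by ℤⁿ-periodic functions on {z ∈ ℂⁿ : |Im z| < s}). -/
def strip (n : ℕ) (s : ℝ) : Set (Fin n → ℂ) := {z | ∀ i, |(z i).im| < s}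

lemma strip_open (n : ℕ) (s : ℝ) : IsOpen (strip n s) := by
  have : strip n s = ⋂ i : Fin n, {z : Fin n → ℂ | |(z i).im| < s} := by
    ext z; simp [strip]
  rw [this]
  exact isOpen_iInter_of_finite fun i =>
    isOpen_lt (by fun_prop) continuous_const

/-- Cauchy estimate for Lie derivatives: if V is a bounded analytic
ℤⁿ-periodic vector field on 𝕋ⁿ_s with |V|_s ≤ Mv and f a bounded analytic ℤⁿ-periodic
function with |f|_s ≤ Mf, then for 0 < ς < s the Lie derivative
ℒ_V f (z) = (d/dt)(f∘V^t)|_{t=0}(z) = df(z)·V(z) satisfies |ℒ_V f|_{s−ς} ≤ ς⁻¹ Mv Mf. -/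
theorem stmt_16 (n : ℕ) (s ς : ℝ) (hς : 0 < ς) (hςs : ς < s)
    (V : (Fin n → ℂ) → (Fin n → ℂ)) (f : (Fin n → ℂ) → ℂ)
    (hVd : DifferentiableOn ℂ V (strip n s))
    (hfd : DifferentiableOn ℂ f (strip n s))
    (hVper : ∀ z, ∀ m : Fin n → ℤ, V (z + fun i => (m i : ℂ)) = V z)
    (hfper : ∀ z, ∀ m : Fin n → ℤ, f (z + fun i => (m i : ℂ)) = f z)
    (Mv Mf : ℝ)
    (hMv : ∀ z ∈ strip n s, ‖V z‖ ≤ Mv)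
    (hMf : ∀ z ∈ strip n s, ‖f z‖ ≤ Mf) :
    ∀ z ∈ strip n (s - ς), ‖fderiv ℂ f z (V z)‖ ≤ ς⁻¹ * Mv * Mf := by
  intro z hz
  have hzs : z ∈ strip n s := fun i => (hz i).trans (by linarith)
  have hopen := strip_open n s
  have hfz : DifferentiableAt ℂ f z := hfd.differentiableAt (hopen.mem_nhds hzs)
  set v := V z with hv
  have hMv0 : 0 ≤ Mv := le_trans (norm_nonneg _) (hMv z hzs)
  rcases eq_or_lt_of_le hMv0 with hMv0' | hMv0'
  · -- Mv = 0, so V z = 0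
    have hvz : v = 0 := by
      have := hMv z hzs
      rw [← hMv0'] at this
      exact norm_le_zero_iff.mp this
    simp [hvz, ← hMv0']
  · -- Mv > 0
    set R : ℝ := ς / Mv with hR
    have hRpos : 0 < R := div_pos hς hMv0'
    set g : ℂ → ℂ := fun t => f (z + t • v) with hg
    -- the closed ball maps into strip n s
    have hmaps : ∀ t : ℂ, t ∈ Metric.closedBall (0:ℂ) R → (z + t • v) ∈ strip n s := by
      intro t ht i
      have htn : ‖t‖ ≤ R := by simpa using ht
      have hvi : ‖v i‖ ≤ Mv := le_trans (norm_le_pi_norm v i) (hMv z hzs)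
      have h1 : |((t • v) i).im| ≤ ‖t‖ * ‖v i‖ := by
        calc |((t • v) i).im| ≤ ‖(t • v) i‖ := Complex.abs_im_le_norm _
          _ = ‖t * v i‖ := rfl
          _ = ‖t‖ * ‖v i‖ := norm_mul _ _
      have h2 : ‖t‖ * ‖v i‖ ≤ R * Mv :=
        mul_le_mul htn hvi (norm_nonneg _) hRpos.le
      have h3 : R * Mv = ς := by rw [hR]; field_simp
      have h4 : |(z i).im| < s - ς := hz i
      have : |(z i + (t • v) i).im| ≤ |(z i).im| + |((t • v) i).im| := by
        rw [Complex.add_im]; exact abs_add_le _ _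
      calc |((z + t • v) i).im| = |(z i + (t • v) i).im| := rfl
        _ ≤ |(z i).im| + |((t • v) i).im| := this
        _ < (s - ς) + ς := by
            have := h1.trans (h2.trans_eq h3)
            linarith
        _ = s := by ring
    have hgd : DifferentiableOn ℂ g (Metric.closedBall (0:ℂ) R) := by
      intro t ht
      have : DifferentiableAt ℂ g t := by
        have hmem : (z + t • v) ∈ strip n s := hmaps t ht
        have hfd' : DifferentiableAt ℂ f (z + t • v) :=
          hfd.differentiableAt (hopen.mem_nhds hmem)
        have hlin : DifferentiableAt ℂ (fun t : ℂ => z + t • v) t := by fun_prop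
        exact hfd'.comp t hlin
      exact this.differentiableWithinAt
    have hdcl : DiffContOnCl ℂ g (Metric.ball (0:ℂ) R) := by
      apply DifferentiableOn.diffContOnCl
      rwa [closure_ball _ hRpos.ne']
    have hC : ∀ t ∈ Metric.sphere (0:ℂ) R, ‖g t‖ ≤ Mf := by
      intro t ht
      exact hMf _ (hmaps t (Metric.sphere_subset_closedBall ht))
    have hbound : ‖deriv g 0‖ ≤ Mf / R :=
      Complex.norm_deriv_le_of_forall_mem_sphere_norm_le hRpos hdcl hC
    -- deriv g 0 = fderiv f z v
    have hderiv : deriv g 0 = fderiv ℂ f z v := by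
      have hlin : HasDerivAt (fun t : ℂ => z + t • v) v 0 := by
        simpa using ((hasDerivAt_id (0:ℂ)).smul_const v).const_add z
      have : HasDerivAt g (fderiv ℂ f z v) 0 := by
        have hfz' : HasFDerivAt f (fderiv ℂ f z) (z + (0:ℂ) • v) := by
          simpa using hfz.hasFDerivAt
        have := hfz'.comp_hasDerivAt 0 hlin
        exact this
      exact this.deriv
    rw [← hderiv]
    calc ‖deriv g 0‖ ≤ Mf / R := hbound
      _ = ς⁻¹ * Mv * Mf := by rw [hR]; field_simp
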